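/- For every positive integer x, β(x) = β(x − l̃_{γ(x)}) + 1. -/

import Mathlib

/-- The Lucas sequence: l 0 = 2, l 1 = 1, l (n+2) = l (n+1) + l n. -/
def lucas : ℕ → ℕ
  | 0 => 2
  | 1 => 1
  | n + 2 => lucas (n + 1) + lucas n

/-- The modified (monotone) Lucas sequence: l̃ 0 = 1, l̃ 1 = 2, l̃ n = l n for n ≥ 2. -/
def ltil : ℕ → ℕ
  | 0 => 1
  | 1 => 2
  | n + 2 => lucas (n + 2)

/-- β x : minimal number of summands in a representation of x as a sum of
modified Lucas numbers (with repetitions allowed). -/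
noncomputable def beta (x : ℕ) : ℕ :=
  sInf {s : ℕ | ∃ k : ℕ, ∃ b : ℕ → ℕ,
    x = ∑ i ∈ Finset.range (k + 1), b i * ltil i ∧ s = ∑ i ∈ Finset.range (k + 1), b i}

/-- γ x : the greatest k with l̃ k ≤ x (for x ≥ 1). -/
noncomputable def gamma (x : ℕ) : ℕ := sSup {k : ℕ | ltil k ≤ x}

/-- S a : the additive submonoid of ℕ generated by {l_a} ∪ {l_a + l_n : n ∈ ℕ}. -/
def Sset (a : ℕ) : AddSubmonoid ℕ :=
  AddSubmonoid.closure ({lucas a} ∪ {x : ℕ | ∃ n : ℕ, x = lucas a + lucas n})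

/-- T a : the additive submonoid of ℕ generated by {l_a + l_n : n ∈ ℕ}. -/
def Tset (a : ℕ) : AddSubmonoid ℕ :=
  AddSubmonoid.closure {x : ℕ | ∃ n : ℕ, x = lucas a + lucas n}

lemma lucas_pos : ∀ n, 0 < lucas n
  | 0 => by simp [lucas]
  | 1 => by simp [lucas]
  | n + 2 => by rw [lucas]; exact Nat.add_pos_left (lucas_pos (n+1)) _

lemma ltil_pos : ∀ n, 0 < ltil n
  | 0 => by simp [ltil]
  | 1 => by simp [ltil]
  | n + 2 => lucas_pos (n+2)

lemma ltil_rec : ∀ n, n ≠ 1 → ltil (n + 2) = ltil (n + 1) + ltil n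
  | 0, _ => by simp [ltil, lucas]
  | 1, h => absurd rfl h
  | n + 2, _ => by show lucas (n+4) = lucas (n+3) + lucas (n+2); rw [lucas]

lemma ltil_strictMono : StrictMono ltil := by
  apply strictMono_nat_of_lt_succ
  intro n
  match n with
  | 0 => simp [ltil]
  | 1 => simp [ltil, lucas]
  | n + 2 =>
    show lucas (n+2) < lucas (n+3)
    have h : lucas (n+3) = lucas (n+2) + lucas (n+1) := by
      show lucas ((n+1)+2) = _
      rw [lucas]
    have := lucas_pos (n+1)
    omega

lemma le_ltil (n : ℕ) : n ≤ ltil n := ltil_strictMono.le_apply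

lemma small_dec : ∀ j < 4, ∀ F ∈ (Finset.range 4).powerset,
    (∀ e ∈ Finset.range 4, ¬(e ∈ F ∧ e+1 ∈ F)) → ¬(0 ∈ F ∧ 2 ∈ F) →
    (∀ e ∈ F, e ≤ j) →
    ∑ e ∈ F, ltil e < ltil (j+1) := by decide

lemma sum_lt (j : ℕ) : ∀ F : Finset ℕ, (∀ e ∈ F, e ≤ j) →
    (∀ e : ℕ, ¬(e ∈ F ∧ e+1 ∈ F)) → ¬(0 ∈ F ∧ 2 ∈ F) →
    ∑ e ∈ F, ltil e < ltil (j+1) := by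
  induction j using Nat.strong_induction_on with
  | _ j IH =>
  intro F hle hadj h02
  by_cases hj4 : j < 4
  · refine small_dec j hj4 F ?_ (fun e _ => hadj e) h02 hle
    exact Finset.mem_powerset.mpr fun e he => Finset.mem_range.mpr (by have := hle e he; omega)
  · push_neg at hj4
    by_cases hj : j ∈ F
    · have hrec : ltil (j+1) = ltil j + ltil (j-1) := by
        have := ltil_rec (j-1) (by omega)
        have e1 : j - 1 + 2 = j + 1 := by omega
        have e2 : j - 1 + 1 = j := by omega
        rw [e1, e2] at this
        exact this
      have hFe : ∀ e ∈ F.erase j, e ≤ j - 2 := by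
        intro e he
        have h1 := Finset.mem_of_mem_erase he
        have h2 := Finset.ne_of_mem_erase he
        have h3 : e ≠ j - 1 := by
          intro h
          exact hadj (j-1) ⟨h ▸ h1, by rwa [show j - 1 + 1 = j by omega]⟩
        have := hle e h1
        omega
      have hsub := IH (j-2) (by omega) (F.erase j) hFe
        (fun e => fun ⟨h1, h2⟩ => hadj e ⟨Finset.mem_of_mem_erase h1, Finset.mem_of_mem_erase h2⟩)
        (fun ⟨h1, h2⟩ => h02 ⟨Finset.mem_of_mem_erase h1, Finset.mem_of_mem_erase h2⟩)
      rw [show j - 2 + 1 = j - 1 by omega] at hsub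
      have hsplit := Finset.add_sum_erase F ltil hj
      omega
    · have hFe : ∀ e ∈ F, e ≤ j - 1 := fun e he => by
        have := hle e he; have : e ≠ j := fun h => hj (h ▸ he); omega
      have hsub := IH (j-1) (by omega) F hFe hadj h02
      rw [show j - 1 + 1 = j by omega] at hsub
      exact hsub.trans (ltil_strictMono (by omega))

lemma lt0 : ltil 0 = 1 := rfl
lemma lt1 : ltil 1 = 2 := rfl
lemma lt2 : ltil 2 = 3 := by simp [ltil, lucas]
lemma lt3 : ltil 3 = 4 := by simp [ltil, lucas]
lemma lt4 : ltil 4 = 7 := by simp [ltil, lucas]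

lemma key (x g : ℕ) (hg1 : ltil g ≤ x) (hg2 : ∀ e, ltil e ≤ x → e ≤ g) :
    ∀ m : Multiset ℕ, (m.map ltil).sum = x →
    ∃ m' : Multiset ℕ, (m'.map ltil).sum = x ∧ m'.card ≤ m.card ∧ g ∈ m' := by
  suffices H : ∀ N (m : Multiset ℕ), (m.map fun e => 3^(g+1) - 3^e).sum ≤ N →
      (m.map ltil).sum = x →
      ∃ m' : Multiset ℕ, (m'.map ltil).sum = x ∧ m'.card ≤ m.card ∧ g ∈ m' by
    exact fun m h => H _ m le_rfl h
  intro N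
  induction N using Nat.strong_induction_on with
  | _ N IH =>
  intro m hN hsum
  by_cases hgm : g ∈ m
  · exact ⟨m, hsum, le_rfl, hgm⟩
  have hmem : ∀ e ∈ m, e < g := by
    intro e he
    have h1 : ltil e ≤ x := by
      refine le_trans ?_ hsum.le
      exact Multiset.single_le_sum (fun y _ => Nat.zero_le y) _ (Multiset.mem_map_of_mem ltil he)
    exact lt_of_le_of_ne (hg2 e h1) (fun h => hgm (h ▸ he))
  have finish : ∀ m'' : Multiset ℕ, (m''.map ltil).sum = x → m''.card ≤ m.card →
      (m''.map fun e => 3^(g+1) - 3^e).sum < (m.map fun e => 3^(g+1) - 3^e).sum →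
      ∃ m' : Multiset ℕ, (m'.map ltil).sum = x ∧ m'.card ≤ m.card ∧ g ∈ m' := by
    intro m'' h1 h2 h3
    obtain ⟨m', a, b, c⟩ := IH _ (lt_of_lt_of_le h3 hN) m'' le_rfl h1
    exact ⟨m', a, b.trans h2, c⟩
  have hB : (3:ℕ)^(g+1) = 3 * 3^g := by rw [pow_succ]; ring
  have hpowle : ∀ e : ℕ, e ≤ g → (3:ℕ)^e ≤ 3^g :=
    fun e he => Nat.pow_le_pow_right (by norm_num) he
  have hpow1 : ∀ e : ℕ, (1:ℕ) ≤ 3^e := fun e => Nat.one_le_pow _ _ (by norm_num)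
  have hpowg := hpow1 g
  by_cases hdup : ∃ p, 2 ≤ m.count p
  · obtain ⟨p, hp2⟩ := hdup
    have hp : p ∈ m := by rw [← Multiset.count_pos]; omega
    have hpg : p < g := hmem p hp
    have hp' : p ∈ m.erase p := by
      rw [← Multiset.count_pos, Multiset.count_erase_self]; omega
    have hm : m = p ::ₘ p ::ₘ (m.erase p).erase p := by
      rw [Multiset.cons_erase hp', Multiset.cons_erase hp]
    set rest := (m.erase p).erase p with hrest
    have hsum' := hsum
    rw [hm] at hsum'
    simp only [Multiset.map_cons, Multiset.sum_cons] at hsum'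
    have hcard : m.card = rest.card + 2 := by rw [hm]; simp
    have hμ : (m.map fun e => 3^(g+1) - 3^e).sum
        = (3^(g+1) - 3^p) + ((3^(g+1) - 3^p) + (rest.map fun e => 3^(g+1) - 3^e).sum) := by
      rw [hm]; simp only [Multiset.map_cons, Multiset.sum_cons]
    match p, hpg, hp2, hsum', hμ with
    | 0, hpg, hp2, hsum', hμ =>
      refine finish (1 ::ₘ rest) ?_ ?_ ?_ <;>
        simp only [Multiset.map_cons, Multiset.sum_cons, Multiset.card_cons, lt0, lt1] at *
      · omega
      · omega
      · have := hpowle 1 hpg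
        omega
    | 1, hpg, hp2, hsum', hμ =>
      refine finish (3 ::ₘ rest) ?_ ?_ ?_ <;>
        simp only [Multiset.map_cons, Multiset.sum_cons, Multiset.card_cons, lt1, lt3] at *
      · omega
      · omega
      · have h1 := hpowle 2 hpg
        have h2 : (3:ℕ)^2 = 9 := by norm_num
        have h3 : (3:ℕ)^1 = 3 := by norm_num
        have h4 : (3:ℕ)^3 = 27 := by norm_num
        omega
    | 2, hpg, hp2, hsum', hμ =>
      refine finish (3 ::ₘ 1 ::ₘ rest) ?_ ?_ ?_ <;>
        simp only [Multiset.map_cons, Multiset.sum_cons, Multiset.card_cons, lt1, lt2, lt3] at *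
      · omega
      · omega
      · have h1 := hpowle 3 hpg
        have h2 : (3:ℕ)^2 = 9 := by norm_num
        have h3 : (3:ℕ)^1 = 3 := by norm_num
        have h4 : (3:ℕ)^3 = 27 := by norm_num
        omega
    | 3, hpg, hp2, hsum', hμ =>
      refine finish (4 ::ₘ 0 ::ₘ rest) ?_ ?_ ?_ <;>
        simp only [Multiset.map_cons, Multiset.sum_cons, Multiset.card_cons, lt0, lt3, lt4] at *
      · omega
      · omega
      · have h1 := hpowle 4 hpg
        have h2 : (3:ℕ)^0 = 1 := by norm_num
        have h3 : (3:ℕ)^3 = 27 := by norm_num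
        have h4 : (3:ℕ)^4 = 81 := by norm_num
        omega
    | (r+4), hpg, hp2, hsum', hμ =>
      have hi1 := ltil_rec (r+3) (by omega)
      have hi2 := ltil_rec (r+2) (by omega)
      rw [show r+3+2 = r+5 by omega, show r+3+1 = r+4 by omega] at hi1
      rw [show r+2+2 = r+4 by omega, show r+2+1 = r+3 by omega] at hi2
      refine finish ((r+5) ::ₘ (r+2) ::ₘ rest) ?_ ?_ ?_ <;>
        simp only [Multiset.map_cons, Multiset.sum_cons, Multiset.card_cons] at *
      · omega
      · omega
      · have h1 := hpowle (r+5) (by omega)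
        have h2 : (3:ℕ)^(r+3) = 3 * 3^(r+2) := by rw [pow_succ]; ring
        have h3 : (3:ℕ)^(r+4) = 3 * 3^(r+3) := by rw [pow_succ]; ring
        have h4 : (3:ℕ)^(r+5) = 3 * 3^(r+4) := by rw [pow_succ]; ring
        have h5 := hpow1 (r+2)
        omega
  · by_cases hadj : ∃ p, p ∈ m ∧ p + 1 ∈ m
    · obtain ⟨p, hp, hp1⟩ := hadj
      have hpg : p < g := hmem p hp
      have hp1g : p + 1 < g := hmem _ hp1
      have hp1' : p + 1 ∈ m.erase p := (Multiset.mem_erase_of_ne (by omega)).mpr hp1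
      obtain ⟨rest, hm⟩ : ∃ rest, m = p ::ₘ (p+1) ::ₘ rest :=
        ⟨(m.erase p).erase (p+1), by rw [Multiset.cons_erase hp1', Multiset.cons_erase hp]⟩
      have hsum' := hsum
      rw [hm] at hsum'
      simp only [Multiset.map_cons, Multiset.sum_cons] at hsum'
      have hcard : m.card = rest.card + 2 := by rw [hm]; simp
      have hμ : (m.map fun e => 3^(g+1) - 3^e).sum
          = (3^(g+1) - 3^p) + ((3^(g+1) - 3^(p+1)) + (rest.map fun e => 3^(g+1) - 3^e).sum) := by
        rw [hm]; simp only [Multiset.map_cons, Multiset.sum_cons]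
      match p, hpg, hp1g, hsum', hμ with
      | 0, hpg, hp1g, hsum', hμ =>
        refine finish (2 ::ₘ rest) ?_ ?_ ?_ <;>
          simp only [Multiset.map_cons, Multiset.sum_cons, Multiset.card_cons, lt0, lt1, lt2, Nat.reduceAdd] at *
        · omega
        · omega
        · have h1 := hpowle 2 (by omega)
          have h2 : (3:ℕ)^2 = 9 := by norm_num
          have h3 : (3:ℕ)^1 = 3 := by norm_num
          have h4 : (3:ℕ)^0 = 1 := by norm_num
          omega
      | 1, hpg, hp1g, hsum', hμ =>
        refine finish (0 ::ₘ 3 ::ₘ rest) ?_ ?_ ?_ <;>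
          simp only [Multiset.map_cons, Multiset.sum_cons, Multiset.card_cons,
            lt0, lt1, lt2, lt3, Nat.reduceAdd] at *
        · omega
        · omega
        · have h1 := hpowle 3 (by omega)
          have h2 : (3:ℕ)^2 = 9 := by norm_num
          have h3 : (3:ℕ)^1 = 3 := by norm_num
          have h4 : (3:ℕ)^0 = 1 := by norm_num
          have h5 : (3:ℕ)^3 = 27 := by norm_num
          omega
      | (q+2), hpg, hp1g, hsum', hμ =>
        have hi1 := ltil_rec (q+2) (by omega)
        rw [show q+2+2 = q+4 by omega, show q+2+1 = q+3 by omega] at hi1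
        rw [show q+2+1 = q+3 by omega] at hsum' hμ
        refine finish ((q+4) ::ₘ rest) ?_ ?_ ?_ <;>
          simp only [Multiset.map_cons, Multiset.sum_cons, Multiset.card_cons] at *
        · omega
        · omega
        · have h1 := hpowle (q+2) (by omega)
          have h2 := hpowle (q+3) (by omega)
          have h3 := hpow1 (q+4)
          omega
    · by_cases h02 : 0 ∈ m ∧ 2 ∈ m
      · obtain ⟨h0, h2'⟩ := h02
        have hg3 : 2 < g := hmem 2 h2'
        have h2'' : 2 ∈ m.erase 0 := (Multiset.mem_erase_of_ne (by omega)).mpr h2'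
        have hm : m = 0 ::ₘ 2 ::ₘ (m.erase 0).erase 2 := by
          rw [Multiset.cons_erase h2'', Multiset.cons_erase h0]
        set rest := (m.erase 0).erase 2 with hrest
        have hsum' := hsum
        rw [hm] at hsum'
        simp only [Multiset.map_cons, Multiset.sum_cons, lt0, lt2] at hsum'
        have hcard : m.card = rest.card + 2 := by rw [hm]; simp
        have hμ : (m.map fun e => 3^(g+1) - 3^e).sum
            = (3^(g+1) - 3^0) + ((3^(g+1) - 3^2) + (rest.map fun e => 3^(g+1) - 3^e).sum) := by
          rw [hm]; simp only [Multiset.map_cons, Multiset.sum_cons]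
        refine finish (3 ::ₘ rest) ?_ ?_ ?_ <;>
          simp only [Multiset.map_cons, Multiset.sum_cons, Multiset.card_cons, lt3] at *
        · omega
        · omega
        · have h1 := hpowle 3 (by omega)
          have h2 : (3:ℕ)^2 = 9 := by norm_num
          have h3 : (3:ℕ)^0 = 1 := by norm_num
          have h4 : (3:ℕ)^3 = 27 := by norm_num
          omega
      · exfalso
        have hnodup : m.Nodup := by
          rw [Multiset.nodup_iff_count_le_one]
          intro a
          by_contra h
          exact hdup ⟨a, by omega⟩
        have hg1' : 1 ≤ g := by
          have hxm : m ≠ 0 := by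
            intro h
            rw [h] at hsum
            simp at hsum
            have := ltil_pos g
            omega
          obtain ⟨e, he⟩ := Multiset.exists_mem_of_ne_zero hxm
          have := hmem e he
          omega
        have hFsum : ∑ e ∈ m.toFinset, ltil e = x := by
          rw [Finset.sum_eq_multiset_sum]
          rw [Multiset.toFinset_val, Multiset.Nodup.dedup hnodup]
          exact hsum
        have hlt := sum_lt (g-1) m.toFinset
          (fun e he => by have := hmem e (Multiset.mem_toFinset.mp he); omega)
          (fun e ⟨a, b⟩ => hadj ⟨e, Multiset.mem_toFinset.mp a, Multiset.mem_toFinset.mp b⟩)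
          (fun ⟨a, b⟩ => h02 ⟨Multiset.mem_toFinset.mp a, Multiset.mem_toFinset.mp b⟩)
        rw [show g - 1 + 1 = g by omega] at hlt
        omega

-- multiset → rep
lemma rep_of_multiset (m : Multiset ℕ) :
    ∃ k : ℕ, ∃ b : ℕ → ℕ,
      (m.map ltil).sum = ∑ i ∈ Finset.range (k + 1), b i * ltil i ∧
      m.card = ∑ i ∈ Finset.range (k + 1), b i := by
  have hsub : m.toFinset ⊆ Finset.range ((m.map ltil).sum + 1) := by
    intro e he
    rw [Finset.mem_range]
    have he' := Multiset.mem_toFinset.mp he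
    have h1 : ltil e ≤ (m.map ltil).sum :=
      Multiset.single_le_sum (fun y _ => Nat.zero_le y) _ (Multiset.mem_map_of_mem ltil he')
    have := le_ltil e
    omega
  refine ⟨(m.map ltil).sum, fun i => m.count i, ?_, ?_⟩
  · rw [← Finset.sum_subset hsub (fun e _ he => by
      simp [Multiset.count_eq_zero_of_notMem (fun hh => he (Multiset.mem_toFinset.mpr hh))])]
    rw [Finset.sum_multiset_map_count]
    simp [smul_eq_mul]
  · rw [← Finset.sum_subset hsub (fun e _ he => by
      simp [Multiset.count_eq_zero_of_notMem (fun hh => he (Multiset.mem_toFinset.mpr hh))])]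
    exact (Multiset.toFinset_sum_count_eq m).symm

-- rep → multiset
lemma multiset_of_rep : ∀ (k : ℕ) (b : ℕ → ℕ),
    ∃ m : Multiset ℕ, (m.map ltil).sum = ∑ i ∈ Finset.range (k + 1), b i * ltil i ∧
      m.card = ∑ i ∈ Finset.range (k + 1), b i := by
  intro k
  induction k with
  | zero =>
    intro b
    refine ⟨Multiset.replicate (b 0) 0, ?_, ?_⟩ <;>
      simp [Multiset.map_replicate, Multiset.sum_replicate, mul_comm]
  | succ k IHk =>
    intro b
    obtain ⟨m, h1, h2⟩ := IHk b
    refine ⟨m + Multiset.replicate (b (k+1)) (k+1), ?_, ?_⟩ <;>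
      simp [Multiset.map_replicate, Multiset.sum_replicate, Finset.sum_range_succ, h1, h2, mul_comm]

lemma beta_le_of_multiset (x : ℕ) (m : Multiset ℕ) (h : (m.map ltil).sum = x) :
    beta x ≤ m.card := by
  apply Nat.sInf_le
  obtain ⟨k, b, h1, h2⟩ := rep_of_multiset m
  exact ⟨k, b, by omega, h2⟩

lemma exists_multiset_beta (x : ℕ) :
    ∃ m : Multiset ℕ, (m.map ltil).sum = x ∧ m.card = beta x := by
  have hne : {s : ℕ | ∃ k : ℕ, ∃ b : ℕ → ℕ,
      x = ∑ i ∈ Finset.range (k + 1), b i * ltil i ∧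
      s = ∑ i ∈ Finset.range (k + 1), b i}.Nonempty := by
    exact ⟨x, 0, fun _ => x, by simp [ltil], by simp⟩
  have hmem : ∃ k : ℕ, ∃ b : ℕ → ℕ,
      x = ∑ i ∈ Finset.range (k + 1), b i * ltil i ∧
      beta x = ∑ i ∈ Finset.range (k + 1), b i := Nat.sInf_mem hne
  obtain ⟨k, b, h1, h2⟩ := hmem
  obtain ⟨m, h3, h4⟩ := multiset_of_rep k b
  exact ⟨m, h3.trans h1.symm, h4.trans h2.symm⟩

lemma gamma_le (x : ℕ) (hx : 0 < x) : ltil (gamma x) ≤ x := by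
  have h1 : Set.Nonempty {k : ℕ | ltil k ≤ x} := ⟨0, by show 1 ≤ x; omega⟩
  have h2 : BddAbove {k : ℕ | ltil k ≤ x} :=
    ⟨x, fun k hk => le_trans (le_ltil k) hk⟩
  exact Nat.sSup_mem h1 h2

lemma le_gamma (x k : ℕ) (h : ltil k ≤ x) : k ≤ gamma x := by
  have h2 : BddAbove {k : ℕ | ltil k ≤ x} :=
    ⟨x, fun k hk => le_trans (le_ltil k) hk⟩
  exact le_csSup h2 h

theorem beta_recurrence (x : ℕ) (hx : 0 < x) :
    beta x = beta (x - ltil (gamma x)) + 1 := by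
  set g := gamma x with hg
  clear_value g
  have hg1 : ltil g ≤ x := by rw [hg]; exact gamma_le x hx
  have hg2 : ∀ e, ltil e ≤ x → e ≤ g := by rw [hg]; exact fun e he => le_gamma x e he
  -- direction 1 : beta x ≤ beta (x - L) + 1
  obtain ⟨m0, hm0s, hm0c⟩ := exists_multiset_beta (x - ltil g)
  have hle1 : beta x ≤ beta (x - ltil g) + 1 := by
    have := beta_le_of_multiset x (g ::ₘ m0) (by
      simp only [Multiset.map_cons, Multiset.sum_cons, hm0s]; omega)
    simpa [hm0c] using this
  -- direction 2
  obtain ⟨m, hms, hmc⟩ := exists_multiset_beta x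
  obtain ⟨m', h1, h2, h3⟩ := key x g hg1 hg2 m hms
  obtain ⟨m2, hm2⟩ : ∃ m2, m' = g ::ₘ m2 := ⟨m'.erase g, (Multiset.cons_erase h3).symm⟩
  rw [hm2] at h1 h2
  simp only [Multiset.map_cons, Multiset.sum_cons, Multiset.card_cons] at h1 h2
  have hle2 : beta (x - ltil g) ≤ m2.card :=
    beta_le_of_multiset _ _ (by omega)
  have hbpos : 1 ≤ beta x := by
    rcases Nat.eq_zero_or_pos (beta x) with h | h
    · rw [h, Multiset.card_eq_zero] at hmc
      rw [hmc] at hms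
      simp at hms
      omega
    · exact h
  omega
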